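/- Let α ≠ 0, let A = diag(1,1,α), and let X ∈ M₃(ℝ) be the matrix whose only nonzero entry is a 1 in position (2,1). Let H = {exp(sA + tX) : s,t ∈ ℝ} act on ℝ³; explicitly, exp(sA+tX)v = (e^s v₁, e^s(v₂ + t v₁), e^{αs} v₃). Then Ω = {v ∈ ℝ³ : v₁ ≠ 0} is H-invariant and Σ = {v ∈ ℝ³ : |v₁| = 1 and v₂ = 0} is a topological section for the H-action on Ω; consequently, since every connected component of Σ is unbounded, Ω/H contains no nonempty compact open subset. -/

import Mathlib

open Set Topology
open scoped Real

noncomputable section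

/-- The action of `(s,t) ∈ ℝ²` on `ℝ³` by `exp(sA + tX)` with `A = diag(1,1,α)` and
`X = E₂₁`: explicitly `v ↦ (e^s v₁, e^s(v₂ + t v₁), e^{αs} v₃)`. -/
def act (α : ℝ) (p : ℝ × ℝ) (v : Fin 3 → ℝ) : Fin 3 → ℝ :=
  ![Real.exp p.1 * v 0, Real.exp p.1 * (v 1 + p.2 * v 0), Real.exp (α * p.1) * v 2]

/-- `Ω = {v ∈ ℝ³ : v₁ ≠ 0}`. -/
def Om : Set (Fin 3 → ℝ) := {v | v 0 ≠ 0}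

/-- `Σ = {v ∈ ℝ³ : |v₁| = 1 and v₂ = 0}`. -/
def Sec : Set (Fin 3 → ℝ) := {v | |v 0| = 1 ∧ v 1 = 0}

/-- The orbit equivalence relation on `Ω`; `Quot (orbitRel α)` is the orbit space `Ω/H`
with the quotient topology. -/
def orbitRel (α : ℝ) (x y : ↥Om) : Prop :=
  ∃ p : ℝ × ℝ, act α p (x : Fin 3 → ℝ) = (y : Fin 3 → ℝ)

/-! ### Auxiliary material -/

/-- The retraction `Ω → Σ`: `v ↦ (v₁/|v₁|, 0, v₃/|v₁|^α)`. -/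
def rmap (α : ℝ) (v : Fin 3 → ℝ) : Fin 3 → ℝ :=
  ![v 0 / |v 0|, 0, v 2 / Real.exp (α * Real.log |v 0|)]

lemma rmap_mem (α : ℝ) {v : Fin 3 → ℝ} (h : v 0 ≠ 0) : rmap α v ∈ Sec := by
  constructor
  · show abs (v 0 / abs (v 0)) = 1
    rw [abs_div, abs_abs, div_self (abs_ne_zero.2 h)]
  · show (0:ℝ) = 0
    rfl

lemma act_rmap (α : ℝ) {v : Fin 3 → ℝ} (h : v 0 ≠ 0) :
    act α (Real.log |v 0|, v 1 / v 0) (rmap α v) = v := by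
  have h0 : (0:ℝ) < |v 0| := abs_pos.2 h
  have hel : Real.exp (Real.log |v 0|) = |v 0| := Real.exp_log h0
  funext i
  fin_cases i
  · show Real.exp (Real.log |v 0|) * (v 0 / |v 0|) = v 0
    rw [hel]; field_simp
  · show Real.exp (Real.log |v 0|) * (0 + v 1 / v 0 * (v 0 / |v 0|)) = v 1
    rw [hel]; field_simp; ring
  · show Real.exp (α * Real.log |v 0|) * (v 2 / Real.exp (α * Real.log |v 0|)) = v 2
    rw [mul_div_cancel₀]; exact (Real.exp_pos _).ne'

lemma rmap_act (α : ℝ) (p : ℝ × ℝ) {v : Fin 3 → ℝ} (h : v 0 ≠ 0) :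
    rmap α (act α p v) = rmap α v := by
  have h0 : (0:ℝ) < |v 0| := abs_pos.2 h
  have he : (0:ℝ) < Real.exp p.1 := Real.exp_pos _
  have habs : |Real.exp p.1 * v 0| = Real.exp p.1 * |v 0| := by
    rw [abs_mul, abs_of_pos he]
  funext i
  fin_cases i
  · show Real.exp p.1 * v 0 / |Real.exp p.1 * v 0| = v 0 / |v 0|
    rw [habs, mul_div_mul_left _ _ he.ne']
  · show (0:ℝ) = (0:ℝ)
    rfl
  · show Real.exp (α * p.1) * v 2 / Real.exp (α * Real.log |Real.exp p.1 * v 0|)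
        = v 2 / Real.exp (α * Real.log |v 0|)
    rw [habs, Real.log_mul he.ne' h0.ne', Real.log_exp, mul_add, Real.exp_add,
      mul_div_mul_left _ _ (Real.exp_pos _).ne']

lemma rmap_sec (α : ℝ) {v : Fin 3 → ℝ} (h : v ∈ Sec) : rmap α v = v := by
  obtain ⟨h1, h2⟩ := h
  funext i
  fin_cases i
  · show v 0 / |v 0| = v 0
    rw [h1, div_one]
  · show (0:ℝ) = v 1
    rw [h2]
  · show v 2 / Real.exp (α * Real.log |v 0|) = v 2
    rw [h1, Real.log_one, mul_zero, Real.exp_zero, div_one]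

lemma sec_ne_zero {v : Fin 3 → ℝ} (h : v ∈ Sec) : v 0 ≠ 0 := by
  intro h0
  have h1 := h.1
  rw [h0] at h1
  simpa using h1

lemma sec_sub_om : Sec ⊆ Om := fun _ h => sec_ne_zero h

lemma act_mem_om (α : ℝ) (p : ℝ × ℝ) {v : Fin 3 → ℝ} (h : v ∈ Om) : act α p v ∈ Om := by
  show Real.exp p.1 * v 0 ≠ 0
  exact mul_ne_zero (Real.exp_pos _).ne' h

/-- The forward map of the section homeomorphism. -/
def fwd (α : ℝ) : (ℝ × ℝ) × ↥Sec → ↥Om :=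
  fun x => ⟨act α x.1 x.2.1, act_mem_om α x.1 (sec_sub_om x.2.2)⟩

/-- The inverse map of the section homeomorphism. -/
def bwd (α : ℝ) : ↥Om → (ℝ × ℝ) × ↥Sec :=
  fun v => ((Real.log |v.1 0|, v.1 1 / v.1 0), ⟨rmap α v.1, rmap_mem α v.2⟩)

lemma cont_coord0 : Continuous fun v : ↥Om => (v : Fin 3 → ℝ) 0 :=
  (continuous_apply 0).comp continuous_subtype_val

lemma cont_log_abs : Continuous fun v : ↥Om => Real.log |(v : Fin 3 → ℝ) 0| := by
  rw [continuous_iff_continuousAt]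
  intro v
  have h1 : ContinuousAt Real.log |(v : Fin 3 → ℝ) 0| := Real.continuousAt_log (abs_ne_zero.2 v.2)
  exact ContinuousAt.comp (f := fun v : ↥Om => |(v : Fin 3 → ℝ) 0|) (g := Real.log) h1
    cont_coord0.abs.continuousAt

lemma cont_rmap (α : ℝ) : Continuous fun v : ↥Om => rmap α (v : Fin 3 → ℝ) := by
  apply continuous_pi
  intro i
  fin_cases i
  · exact cont_coord0.div cont_coord0.abs fun v => abs_ne_zero.2 v.2
  · exact continuous_const
  · exact (((continuous_apply 2).comp continuous_subtype_val).div
      ((continuous_const.mul cont_log_abs).rexp) fun v => (Real.exp_pos _).ne')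

lemma cont_fwd (α : ℝ) : Continuous (fwd α) := by
  apply Continuous.subtype_mk
  apply continuous_pi
  intro i
  have h0 : Continuous fun x : (ℝ × ℝ) × ↥Sec => (x.2 : Fin 3 → ℝ) 0 :=
    (continuous_apply 0).comp (continuous_subtype_val.comp continuous_snd)
  have h1 : Continuous fun x : (ℝ × ℝ) × ↥Sec => (x.2 : Fin 3 → ℝ) 1 :=
    (continuous_apply 1).comp (continuous_subtype_val.comp continuous_snd)
  have h2 : Continuous fun x : (ℝ × ℝ) × ↥Sec => (x.2 : Fin 3 → ℝ) 2 :=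
    (continuous_apply 2).comp (continuous_subtype_val.comp continuous_snd)
  have hs : Continuous fun x : (ℝ × ℝ) × ↥Sec => x.1.1 :=
    continuous_fst.comp continuous_fst
  have ht : Continuous fun x : (ℝ × ℝ) × ↥Sec => x.1.2 :=
    continuous_snd.comp continuous_fst
  fin_cases i
  · show Continuous fun x : (ℝ × ℝ) × ↥Sec => Real.exp x.1.1 * (x.2 : Fin 3 → ℝ) 0
    exact hs.rexp.mul h0
  · show Continuous fun x : (ℝ × ℝ) × ↥Sec =>
      Real.exp x.1.1 * ((x.2 : Fin 3 → ℝ) 1 + x.1.2 * (x.2 : Fin 3 → ℝ) 0)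
    exact hs.rexp.mul (h1.add (ht.mul h0))
  · show Continuous fun x : (ℝ × ℝ) × ↥Sec => Real.exp (α * x.1.1) * (x.2 : Fin 3 → ℝ) 2
    exact (continuous_const.mul hs).rexp.mul h2

lemma cont_bwd (α : ℝ) : Continuous (bwd α) := by
  refine Continuous.prodMk (Continuous.prodMk cont_log_abs ?_) ?_
  · exact ((continuous_apply 1).comp continuous_subtype_val).div cont_coord0 fun v => v.2
  · exact (cont_rmap α).subtype_mk _

lemma bwd_fwd (α : ℝ) (x : (ℝ × ℝ) × ↥Sec) : bwd α (fwd α x) = x := by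
  obtain ⟨⟨s, t⟩, c⟩ := x
  obtain ⟨hc1, hc2⟩ := c.2
  have hc0 : (c : Fin 3 → ℝ) 0 ≠ 0 := sec_ne_zero c.2
  have habs : |(act α (s, t) (c : Fin 3 → ℝ)) 0| = Real.exp s := by
    show |Real.exp s * (c : Fin 3 → ℝ) 0| = Real.exp s
    rw [abs_mul, hc1, mul_one, abs_of_pos (Real.exp_pos _)]
  refine Prod.ext (Prod.ext ?_ ?_) ?_
  · show Real.log |(act α (s, t) (c : Fin 3 → ℝ)) 0| = s
    rw [habs, Real.log_exp]
  · show (act α (s, t) (c : Fin 3 → ℝ)) 1 / (act α (s, t) (c : Fin 3 → ℝ)) 0 = t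
    show Real.exp s * ((c : Fin 3 → ℝ) 1 + t * (c : Fin 3 → ℝ) 0)
        / (Real.exp s * (c : Fin 3 → ℝ) 0) = t
    rw [hc2, zero_add, mul_div_mul_left _ _ (Real.exp_pos s).ne',
      mul_div_cancel_right₀ _ hc0]
  · exact Subtype.ext (by rw [show (bwd α (fwd α ((s, t), c))).2.1
      = rmap α (act α (s, t) (c : Fin 3 → ℝ)) from rfl, rmap_act α _ hc0, rmap_sec α c.2])

lemma fwd_bwd (α : ℝ) (v : ↥Om) : fwd α (bwd α v) = v :=
  Subtype.ext (act_rmap α v.2)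

/-- The section homeomorphism. -/
def secHomeo (α : ℝ) : ((ℝ × ℝ) × ↥Sec) ≃ₜ ↥Om where
  toFun := fwd α
  invFun := bwd α
  left_inv := bwd_fwd α
  right_inv := fwd_bwd α
  continuous_toFun := cont_fwd α
  continuous_invFun := cont_bwd α

/-- The retraction descends to the orbit space. -/
def qmap (α : ℝ) : Quot (orbitRel α) → ↥Sec :=
  Quot.lift (fun v => ⟨rmap α (v : Fin 3 → ℝ), rmap_mem α v.2⟩) (by
    rintro x y ⟨p, hp⟩
    exact Subtype.ext (by dsimp; rw [← hp, rmap_act α p x.2]))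

/-- The inclusion of the section into the orbit space. -/
def smap (α : ℝ) : ↥Sec → Quot (orbitRel α) :=
  fun c => Quot.mk _ ⟨(c : Fin 3 → ℝ), sec_sub_om c.2⟩

lemma qmap_smap (α : ℝ) (c : ↥Sec) : qmap α (smap α c) = c :=
  Subtype.ext (rmap_sec α c.2)

lemma smap_qmap (α : ℝ) (q : Quot (orbitRel α)) : smap α (qmap α q) = q := by
  induction q using Quot.ind with
  | _ v => exact Quot.sound ⟨(Real.log |(v : Fin 3 → ℝ) 0|,
      (v : Fin 3 → ℝ) 1 / (v : Fin 3 → ℝ) 0), act_rmap α v.2⟩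

/-- The orbit space is homeomorphic to the section. -/
def quotHomeo (α : ℝ) : Quot (orbitRel α) ≃ₜ ↥Sec where
  toFun := qmap α
  invFun := smap α
  left_inv := smap_qmap α
  right_inv := qmap_smap α
  continuous_toFun := by
    apply continuous_quot_lift
    exact ((cont_rmap α).subtype_mk _)
  continuous_invFun := continuous_quot_mk.comp (continuous_subtype_val.subtype_mk _)

/-- The section has no nonempty compact open subset. -/
lemma no_compact_open_sec (K : Set ↥Sec) (hne : K.Nonempty) (hK : IsCompact K)
    (hO : IsOpen K) : False := by
  obtain ⟨x, hx⟩ := hne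
  have hx1 : |(x : Fin 3 → ℝ) 0| = 1 := x.2.1
  have hx2 : (x : Fin 3 → ℝ) 1 = 0 := x.2.2
  -- the vertical line through `x`
  have lmem : ∀ t : ℝ, (![(x : Fin 3 → ℝ) 0, 0, t] : Fin 3 → ℝ) ∈ Sec :=
    fun t => ⟨hx1, rfl⟩
  set l : ℝ → ↥Sec := fun t => ⟨![(x : Fin 3 → ℝ) 0, 0, t], lmem t⟩ with hl
  have lcont : Continuous l := by
    apply Continuous.subtype_mk
    apply continuous_pi
    intro i
    fin_cases i
    · exact continuous_const
    · exact continuous_const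
    · exact continuous_id
  have hlx : l ((x : Fin 3 → ℝ) 2) = x := by
    apply Subtype.ext
    funext i
    fin_cases i
    · rfl
    · exact hx2.symm
    · rfl
  have hclopen : IsClopen (l ⁻¹' K) := ⟨hK.isClosed.preimage lcont, hO.preimage lcont⟩
  have huniv : l ⁻¹' K = univ :=
    hclopen.eq_univ ⟨(x : Fin 3 → ℝ) 2, by simp [mem_preimage, hlx, hx]⟩
  have gcont : Continuous fun c : ↥Sec => (c : Fin 3 → ℝ) 2 :=
    (continuous_apply 2).comp continuous_subtype_val
  have himg : (fun c : ↥Sec => (c : Fin 3 → ℝ) 2) '' K = univ := by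
    apply eq_univ_of_forall
    intro t
    refine ⟨l t, ?_, rfl⟩
    have : t ∈ l ⁻¹' K := huniv ▸ mem_univ t
    exact this
  exact (hK.image gcont).ne_univ himg

/-- For `α ≠ 0`, `Ω = {v₁ ≠ 0}` is `H`-invariant, `Σ` is a topological
section for the `H`-action on `Ω`, and `Ω/H` contains no nonempty compact open subset. -/
theorem section_and_no_compact_open_case_2 (α : ℝ) (hα : α ≠ 0) :
    (∀ p : ℝ × ℝ, ∀ v ∈ Om, act α p v ∈ Om) ∧
    Sec ⊆ Om ∧
    (∃ e : ((ℝ × ℝ) × ↥Sec) ≃ₜ ↥Om,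
      ∀ (p : ℝ × ℝ) (c : ↥Sec), ((e (p, c) : ↥Om) : Fin 3 → ℝ) = act α p (c : Fin 3 → ℝ)) ∧
    (¬ ∃ K : Set (Quot (orbitRel α)), K.Nonempty ∧ IsCompact K ∧ IsOpen K) := by
  refine ⟨fun p v hv => act_mem_om α p hv, sec_sub_om, ⟨secHomeo α, fun p c => rfl⟩, ?_⟩
  rintro ⟨K, hne, hK, hO⟩
  refine no_compact_open_sec ((quotHomeo α) '' K) (hne.image _)
    (hK.image (quotHomeo α).continuous) ?_
  rw [Homeomorph.isOpen_image]
  exact hO
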